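/- Let K be an algebraically closed field, u ∈ ℤ^n, and z ∈ K*. The Laurent polynomial X^u − z = X_1^{u_1}⋯X_n^{u_n} − z in K[X_1^{±1},…,X_n^{±1}] is irreducible if and only if u is primitive (the gcd of its entries is 1) (in particular u ≠ 0). -/

import Mathlib

open AddMonoidAlgebra Finset

section Aux

variable {K : Type*} [Field K] {n : ℕ}

private lemma bezout_aux {ι : Type*} [DecidableEq ι] (s : Finset ι) (u : ι → ℤ) :
    ∃ c : ι → ℤ, ∑ i ∈ s, c i * u i = s.gcd u := by
  induction s using Finset.induction_on with
  | empty => exact ⟨0, by simp⟩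
  | @insert a s ha ih =>
    obtain ⟨c, hc⟩ := ih
    refine ⟨fun i => if i = a then Int.gcdA (u a) (s.gcd u)
      else c i * Int.gcdB (u a) (s.gcd u), ?_⟩
    rw [Finset.sum_insert ha, Finset.gcd_insert]
    beta_reduce
    rw [if_pos rfl]
    have h1 : ∑ i ∈ s, (if i = a then Int.gcdA (u a) (s.gcd u)
        else c i * Int.gcdB (u a) (s.gcd u)) * u i
        = (∑ i ∈ s, c i * u i) * Int.gcdB (u a) (s.gcd u) := by
      rw [Finset.sum_mul]
      refine Finset.sum_congr rfl fun i hi => ?_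
      rw [if_neg (by rintro rfl; exact ha hi)]; ring
    rw [h1, hc, ← Int.coe_gcd, Int.gcd_eq_gcd_ab]
    ring

private lemma exists_zpow_eq [IsAlgClosed K] (w : Kˣ) (k : ℤ) (hk : k ≠ 0) :
    ∃ t : Kˣ, t ^ k = w := by
  obtain ⟨s, hs⟩ := IsAlgClosed.exists_pow_nat_eq (w : K)
    (n := k.natAbs) (Int.natAbs_pos.mpr hk)
  have hs0 : s ≠ 0 := by
    rintro rfl
    rw [zero_pow (Int.natAbs_ne_zero.mpr hk)] at hs
    exact w.ne_zero hs.symm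
  have ht0 : Units.mk0 s hs0 ^ k.natAbs = w := by
    ext; rw [Units.val_pow_eq_pow_val, Units.val_mk0, hs]
  rcases Int.natAbs_eq k with h | h
  · exact ⟨Units.mk0 s hs0, by rw [h, zpow_natCast, ht0]⟩
  · refine ⟨(Units.mk0 s hs0)⁻¹, ?_⟩
    rw [h, zpow_neg, inv_zpow, inv_inv, zpow_natCast, ht0]

private def charHom (t : Kˣ) (i0 : Fin n) : Multiplicative (Fin n → ℤ) →* K where
  toFun g := ((t ^ (Multiplicative.toAdd g i0) : Kˣ) : K)
  map_one' := by
    simp only [toAdd_one, Pi.zero_apply, zpow_zero, Units.val_one]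
  map_mul' a b := by
    simp only [toAdd_mul, Pi.add_apply, zpow_add, Units.val_mul]

private lemma charHom_single (t : Kˣ) (i0 : Fin n) (w : Fin n → ℤ) (c : K) :
    (AddMonoidAlgebra.lift K K (Fin n → ℤ) (charHom t i0)) (single w c)
      = c * ((t ^ (w i0) : Kˣ) : K) := by
  rw [AddMonoidAlgebra.lift_single, smul_eq_mul]
  rfl

private lemma not_isUnit_sub [IsAlgClosed K] (w : Fin n → ℤ) (hw : w ≠ 0)
    (c : K) (hc : c ≠ 0) :
    ¬ IsUnit (single w (1:K) - single 0 c : AddMonoidAlgebra K (Fin n → ℤ)) := by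
  obtain ⟨i0, hi0⟩ := Function.ne_iff.mp hw
  obtain ⟨t, ht⟩ := exists_zpow_eq (Units.mk0 c hc) (w i0) hi0
  intro hU
  have hmap := hU.map (AddMonoidAlgebra.lift K K (Fin n → ℤ) (charHom t i0))
  have h0 : (AddMonoidAlgebra.lift K K (Fin n → ℤ) (charHom t i0))
      (single w (1:K) - single 0 c) = 0 := by
    rw [map_sub, charHom_single, charHom_single, one_mul, ht]
    simp
  rw [h0] at hmap
  exact not_isUnit_zero hmap

private def phi (c g : Fin n → ℤ) : ℤ := ∑ i, c i * g i

private lemma phi_add (c a b : Fin n → ℤ) : phi c (a + b) = phi c a + phi c b := by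
  simp [phi, mul_add, Finset.sum_add_distrib]

private lemma phi_zsmul (c : Fin n → ℤ) (k : ℤ) (g : Fin n → ℤ) :
    phi c (k • g) = k * phi c g := by
  simp only [phi, Pi.smul_apply, smul_eq_mul, Finset.mul_sum]
  exact Finset.sum_congr rfl fun i _ => by ring

private noncomputable def mu (c u : Fin n → ℤ) (z : Kˣ) (g : Fin n → ℤ) :
    AddMonoidAlgebra K (Fin n → ℤ) :=
  single (g - phi c g • u) ((z ^ phi c g : Kˣ) : K)

private lemma mu_add (c u : Fin n → ℤ) (z : Kˣ) (a b : Fin n → ℤ) :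
    mu c u z (a + b) = mu (K := K) c u z a * mu c u z b := by
  unfold mu
  rw [AddMonoidAlgebra.single_mul_single]
  congr 1
  · rw [phi_add, add_smul]; abel
  · rw [phi_add, zpow_add, Units.val_mul]

private lemma mu_zero (c u : Fin n → ℤ) (z : Kˣ) : mu (K := K) c u z 0 = 1 := by
  simp [mu, phi, AddMonoidAlgebra.one_def]

private noncomputable def muHom (c u : Fin n → ℤ) (z : Kˣ) :
    Multiplicative (Fin n → ℤ) →* AddMonoidAlgebra K (Fin n → ℤ) where
  toFun g := mu c u z (Multiplicative.toAdd g)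
  map_one' := mu_zero c u z
  map_mul' a b := mu_add c u z _ _

private noncomputable def Ffun (c u : Fin n → ℤ) (z : Kˣ) :
    AddMonoidAlgebra K (Fin n → ℤ) →ₐ[K] AddMonoidAlgebra K (Fin n → ℤ) :=
  AddMonoidAlgebra.lift K _ (Fin n → ℤ) (muHom c u z)

private lemma F_single (c u : Fin n → ℤ) (z : Kˣ) (a : Fin n → ℤ) (b : K) :
    Ffun c u z (single a b) = b • mu c u z a := by
  rw [Ffun, AddMonoidAlgebra.lift_single]
  rfl

private lemma dvd_sub_mu (c u : Fin n → ℤ) (z : Kˣ) (hc : phi c u = 1) (g : Fin n → ℤ) :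
    (single u (1:K) - single 0 (z:K) : AddMonoidAlgebra K (Fin n → ℤ))
      ∣ (single g 1 - mu c u z g) := by
  set P : AddMonoidAlgebra K (Fin n → ℤ) := single u (1:K) - single 0 (z:K) with hP
  let S : AddSubgroup (Fin n → ℤ) :=
    { carrier := {g | P ∣ (single g (1:K) - mu c u z g)}
      zero_mem' := by
        have : (single 0 (1:K) : AddMonoidAlgebra K (Fin n → ℤ)) - mu c u z 0 = 0 := by
          rw [mu_zero, ← AddMonoidAlgebra.one_def, sub_self]
        show P ∣ _
        rw [this]
        exact dvd_zero _
      add_mem' := by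
        intro a b ha hb
        have h1 : (single a (1:K) : AddMonoidAlgebra K (Fin n → ℤ)) * single b 1
            = single (a + b) 1 := by
          rw [AddMonoidAlgebra.single_mul_single, one_mul]
        have key : single (a + b) (1:K) - mu c u z (a + b)
            = single a 1 * (single b 1 - mu c u z b)
              + mu c u z b * (single a 1 - mu c u z a) := by
          rw [mu_add]
          linear_combination -h1
        show P ∣ _
        rw [key]
        exact dvd_add (hb.mul_left _) (ha.mul_left _)
      neg_mem' := by
        intro a ha
        have h2 : (single (-a) (1:K) : AddMonoidAlgebra K (Fin n → ℤ)) * single a 1 = 1 := by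
          rw [AddMonoidAlgebra.single_mul_single, one_mul, neg_add_cancel,
            AddMonoidAlgebra.one_def]
        have h3 : mu (K := K) c u z (-a) * mu c u z a = 1 := by
          rw [← mu_add, neg_add_cancel, mu_zero]
        have key : single (-a) (1:K) - mu c u z (-a)
            = (-(single (-a) 1 * mu c u z (-a))) * (single a 1 - mu c u z a) := by
          linear_combination mu (K := K) c u z (-a) * h2 - single (-a) (1:K) * h3
        show P ∣ _
        rw [key]
        exact (ha.mul_left _) }
  have hker : ∀ g, phi c g = 0 → g ∈ S := by
    intro g hg
    have h : mu (K := K) c u z g = single g 1 := by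
      simp [mu, hg]
    show P ∣ _
    rw [h, sub_self]
    exact dvd_zero _
  have hu : u ∈ S := by
    have h : mu (K := K) c u z u = single 0 (z:K) := by
      simp [mu, hc]
    show P ∣ _
    rw [h]
  have hS : g ∈ S := by
    have hk : phi c (g - phi c g • u) = 0 := by
      have h2 := phi_add c (g - phi c g • u) (phi c g • u)
      rw [sub_add_cancel, phi_zsmul, hc, mul_one] at h2
      omega
    have hmem := S.add_mem (hker _ hk) (S.zsmul_mem hu (phi c g))
    rwa [sub_add_cancel] at hmem
  exact hS

private lemma F_P (c u : Fin n → ℤ) (z : Kˣ) (hc : phi c u = 1) :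
    Ffun c u z (single u (1:K) - single 0 (z:K)) = 0 := by
  rw [map_sub, F_single, F_single, one_smul]
  have h1 : mu (K := K) c u z u = single 0 (z:K) := by simp [mu, hc]
  rw [h1, mu_zero, AddMonoidAlgebra.one_def, AddMonoidAlgebra.smul_single', mul_one, sub_self]

private lemma dvd_sub_F (c u : Fin n → ℤ) (z : Kˣ) (hc : phi c u = 1)
    (f : AddMonoidAlgebra K (Fin n → ℤ)) :
    (single u (1:K) - single 0 (z:K) : AddMonoidAlgebra K (Fin n → ℤ)) ∣ (f - Ffun c u z f) := by
  induction f using AddMonoidAlgebra.induction_on with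
  | of g =>
    have h1 : (AddMonoidAlgebra.of K (Fin n → ℤ) (Multiplicative.ofAdd g))
        = single g (1:K) := rfl
    have h2 : Ffun c u z (single g (1:K)) = mu c u z g := by
      rw [F_single, one_smul]
    rw [h1, h2]
    exact dvd_sub_mu c u z hc g
  | add f g hf hg =>
    have h : f + g - Ffun c u z (f + g) = (f - Ffun c u z f) + (g - Ffun c u z g) := by
      rw [map_add]; ring
    rw [h]
    exact dvd_add hf hg
  | smul r f hf =>
    have h : r • f - Ffun c u z (r • f) = r • (f - Ffun c u z f) := by
      rw [map_smul, smul_sub]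
    rw [h, Algebra.smul_def]
    exact hf.mul_left _

private lemma prime_P (u : Fin n → ℤ) (z : Kˣ) (c : Fin n → ℤ) (hc : phi c u = 1) :
    Prime (single u (1:K) - single 0 (z:K) : AddMonoidAlgebra K (Fin n → ℤ)) := by
  have hu0 : u ≠ 0 := by
    rintro rfl
    simp [phi] at hc
  refine ⟨?_, ?_, ?_⟩
  · intro h0
    have h := sub_eq_zero.mp h0
    rcases AddMonoidAlgebra.single_inj.mp h with ⟨h1, _⟩ | ⟨h1, _⟩
    · exact hu0 h1
    · exact one_ne_zero h1
  · intro hU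
    have h := hU.map (Ffun c u z)
    rw [F_P c u z hc] at h
    exact not_isUnit_zero h
  · intro a b hab
    obtain ⟨q, hq⟩ := hab
    have h0 : Ffun c u z a * Ffun c u z b = 0 := by
      rw [← map_mul, hq, map_mul, F_P c u z hc, zero_mul]
    rcases mul_eq_zero.mp h0 with h | h
    · left
      have hd := dvd_sub_F c u z hc a
      rwa [h, sub_zero] at hd
    · right
      have hd := dvd_sub_F c u z hc b
      rwa [h, sub_zero] at hd

end Aux

/-- Let `K` be an algebraically closed field, `u ∈ ℤ^n` and `z ∈ K*`. The Laurent
polynomial `X^u - z ∈ K[X_1^{±1}, …, X_n^{±1}]` (the Laurent polynomial ring being the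
group algebra of `ℤ^n` over `K`) is irreducible if and only if `u` is primitive,
i.e. the gcd of its entries is `1`. -/
theorem stmt10 (K : Type*) [Field K] [IsAlgClosed K] (n : ℕ) (u : Fin n → ℤ) (z : Kˣ) :
    Irreducible (AddMonoidAlgebra.single u (1 : K) -
        AddMonoidAlgebra.single (0 : Fin n → ℤ) (z : K) : AddMonoidAlgebra K (Fin n → ℤ))
      ↔ Finset.univ.gcd u = 1 := by
  constructor
  · intro h
    by_contra hne
    by_cases hu0 : u = 0
    · subst hu0
      rw [← AddMonoidAlgebra.single_sub] at h
      by_cases hz1 : (1:K) - (z:K) = 0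
      · rw [hz1, AddMonoidAlgebra.single_zero] at h
        exact not_irreducible_zero h
      · refine h.not_isUnit (IsUnit.of_mul_eq_one (single 0 ((1:K) - (z:K))⁻¹) ?_)
        rw [AddMonoidAlgebra.single_mul_single, mul_inv_cancel₀ hz1, add_zero,
          AddMonoidAlgebra.one_def]
    · set d := Finset.univ.gcd u with hd
      have hd0 : d ≠ 0 := by
        rw [Ne, hd, Finset.gcd_eq_zero_iff]
        intro hall
        exact hu0 (funext fun i => hall i (Finset.mem_univ i))
      have hdnn : 0 ≤ d := by
        have hnorm := Finset.normalize_gcd (s := (Finset.univ : Finset (Fin n))) (f := u)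
        rw [← Int.abs_eq_normalize] at hnorm
        rw [hd, ← hnorm]
        exact abs_nonneg _
      set m := d.toNat with hm
      have hdm : d = (m:ℤ) := (Int.toNat_of_nonneg hdnn).symm
      have hm0 : m ≠ 0 := by
        intro h0
        exact hd0 (by rw [hdm, h0, Nat.cast_zero])
      have hm1 : m ≠ 1 := by
        intro h1
        exact hne (by rw [hdm, h1, Nat.cast_one])
      set v : Fin n → ℤ := fun i => u i / d with hv
      have huv : ∀ i, u i = (m:ℤ) * v i := fun i => by
        rw [← hdm, hv]
        exact (Int.mul_ediv_cancel' (Finset.gcd_dvd (Finset.mem_univ i))).symm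
      have husmul : u = m • v := by
        funext i
        rw [huv i]
        simp [nsmul_eq_mul]
      have hv0 : v ≠ 0 := by
        intro h0
        exact hu0 (by rw [husmul, h0, smul_zero])
      obtain ⟨ζ, hζ⟩ := IsAlgClosed.exists_pow_nat_eq (z:K) (Nat.pos_of_ne_zero hm0)
      have hζ0 : ζ ≠ 0 := by
        intro h0
        exact z.ne_zero (by rw [← hζ, h0, zero_pow hm0])
      set Y : AddMonoidAlgebra K (Fin n → ℤ) := single v 1 with hY
      set Z : AddMonoidAlgebra K (Fin n → ℤ) := single 0 ζ with hZ
      have hfact : (∑ i ∈ Finset.range m, Y ^ i * Z ^ (m - 1 - i)) * (Y - Z)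
          = single u (1:K) - single 0 (z:K) := by
        rw [geom_sum₂_mul]
        congr 1
        · rw [hY, AddMonoidAlgebra.single_pow, one_pow, ← husmul]
        · rw [hZ, AddMonoidAlgebra.single_pow, hζ, smul_zero]
      rcases h.isUnit_or_isUnit hfact.symm with hQ | hYZ
      · obtain ⟨i0, hi0⟩ := Function.ne_iff.mp hv0
        set q : Polynomial K := ∑ i ∈ Finset.range m,
          (Polynomial.X : Polynomial K) ^ i * (Polynomial.C ζ) ^ (m - 1 - i) with hqdef
        have hqmul : q * (Polynomial.X - Polynomial.C ζ)
            = Polynomial.X ^ m - Polynomial.C (z:K) := by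
          rw [hqdef, geom_sum₂_mul, ← map_pow, hζ]
        have hqeval : ∀ x : K, q.eval x = ∑ i ∈ Finset.range m, x ^ i * ζ ^ (m - 1 - i) := by
          intro x
          rw [hqdef]
          simp [Polynomial.eval_finset_sum]
        have hqdeg : q.degree ≠ 0 := by
          intro h0
          have h1 : (q * (Polynomial.X - Polynomial.C ζ)).degree = (m : WithBot ℕ) := by
            rw [hqmul]
            exact Polynomial.degree_X_pow_sub_C (Nat.pos_of_ne_zero hm0) _
          rw [Polynomial.degree_mul, h0, Polynomial.degree_X_sub_C, zero_add] at h1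
          have : (1 : ℕ) = m := by exact_mod_cast h1
          exact hm1 this.symm
        obtain ⟨s, hs⟩ := IsAlgClosed.exists_root q hqdeg
        rw [Polynomial.IsRoot] at hs
        have hs0 : s ≠ 0 := by
          rintro rfl
          rw [hqeval] at hs
          rw [Finset.sum_eq_single_of_mem 0 (Finset.mem_range.mpr (Nat.pos_of_ne_zero hm0))
            (fun i _ hi => by rw [zero_pow hi, zero_mul])] at hs
          rw [pow_zero, one_mul] at hs
          exact pow_ne_zero _ hζ0 hs
        obtain ⟨t, ht⟩ := exists_zpow_eq (Units.mk0 s hs0) (v i0) hi0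
        set E := AddMonoidAlgebra.lift K K (Fin n → ℤ) (charHom t i0) with hE
        have hEY : E Y = s := by
          rw [hY, hE, charHom_single, one_mul, ht, Units.val_mk0]
        have hEZ : E Z = ζ := by
          rw [hZ, hE, charHom_single]
          simp
        have hEQ : E (∑ i ∈ Finset.range m, Y ^ i * Z ^ (m - 1 - i)) = 0 := by
          rw [map_sum]
          rw [Finset.sum_congr rfl (fun i _ => by
            rw [map_mul, map_pow, map_pow, hEY, hEZ] :
            ∀ i ∈ Finset.range m, E (Y ^ i * Z ^ (m - 1 - i)) = s ^ i * ζ ^ (m - 1 - i))]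
          rw [← hqeval, hs]
        have hmap := hQ.map E
        rw [hEQ] at hmap
        exact not_isUnit_zero hmap
      · exact not_isUnit_sub v hv0 ζ hζ0 hYZ
  · intro hgcd
    obtain ⟨c, hc⟩ := bezout_aux Finset.univ u
    rw [hgcd] at hc
    haveI : IsDomain (AddMonoidAlgebra K (Fin n → ℤ)) := NoZeroDivisors.to_isDomain _
    exact (prime_P u z c hc).irreducible
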